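/- Let φ₀ be a PDL⁻ formula and e a PDL⁻ term. For every nonempty set X of atoms of φ₀, there exists an atom α ∈ X such that the formula α̂ ∧ [e⁺](⋁_{β ∈ At(φ₀)∖X} β̂) is consistent (where the disjunction over the empty set is F). -/

import Mathlib

/-! Statement 12: for every nonempty set `X` of atoms of `φ₀`, some `α ∈ X` is such
that `α̂ ∧ [e⁺](⋁_{β ∈ At(φ₀)∖X} β̂)` is consistent. -/

/-- A generalized structure over term variables `A` and formula variables `P`,
with universe `W`. -/
structure GStruct (A P W : Type) where
  U : W → W → Prop
  rel : A → W → W → Prop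
  rel_sub : ∀ a x y, rel a x y → U x y
  val : P → W → Prop

/-- The universal relation is a finite linear order (on a nonempty finite universe). -/
def FinLin {A P W : Type} (S : GStruct A P W) : Prop :=
  Nonempty W ∧ Finite W ∧ (∀ x, S.U x x) ∧
    (∀ x y z, S.U x y → S.U y z → S.U x z) ∧
    (∀ x y, S.U x y → S.U y x → x = y) ∧ (∀ x y, S.U x y ∨ S.U y x)

/-- The universal relation is a finite strict linear order
(on a nonempty finite universe). -/
def SFinLin {A P W : Type} (S : GStruct A P W) : Prop :=
  Nonempty W ∧ Finite W ∧ (∀ x, ¬ S.U x x) ∧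
    (∀ x y z, S.U x y → S.U y z → S.U x z) ∧
    (∀ x y, x ≠ y → S.U x y ∨ S.U y x)
mutual
  /-- Formulas of identity-free PDL (PDL⁻). -/
  inductive MFml (A P : Type) : Type where
    | pv : P → MFml A P
    | imp : MFml A P → MFml A P → MFml A P
    | fls : MFml A P
    | box : MTrm A P → MFml A P → MFml A P
  /-- Terms of identity-free PDL (PDL⁻). -/
  inductive MTrm (A P : Type) : Type where
    | tv : A → MTrm A P
    | comp : MTrm A P → MTrm A P → MTrm A P
    | union : MTrm A P → MTrm A P → MTrm A P
    | plus : MTrm A P → MTrm A P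
    | testL : MFml A P → MTrm A P → MTrm A P
    | testR : MTrm A P → MFml A P → MTrm A P
end

namespace MFml
/-- ¬φ := φ → F -/
def neg {A P : Type} (φ : MFml A P) : MFml A P := .imp φ .fls
/-- T := ¬F -/
def tru {A P : Type} : MFml A P := neg .fls
/-- φ ∨ ψ := ¬φ → ψ -/
def or {A P : Type} (φ ψ : MFml A P) : MFml A P := .imp (neg φ) ψ
/-- φ ∧ ψ := ¬(¬φ ∨ ¬ψ) -/
def and {A P : Type} (φ ψ : MFml A P) : MFml A P := neg (or (neg φ) (neg ψ))
/-- φ ↔ ψ := (φ → ψ) ∧ (ψ → φ) -/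
def iff {A P : Type} (φ ψ : MFml A P) : MFml A P := and (.imp φ ψ) (.imp ψ φ)
/-- ⟨e⟩φ := ¬[e]¬φ -/
def dia {A P : Type} (e : MTrm A P) (φ : MFml A P) : MFml A P := neg (.box e (neg φ))
end MFml

mutual
  /-- Semantics of PDL⁻ formulas on a generalized structure. -/
  def msemF {A P W : Type} (S : GStruct A P W) : MFml A P → W → Prop
    | .pv p, x => S.val p x
    | .imp φ ψ, x => msemF S φ x → msemF S ψ x
    | .fls, _ => False
    | .box e φ, x => ∀ y, msemT S e x y → msemF S φ y
  /-- Semantics of PDL⁻ terms on a generalized structure. -/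
  def msemT {A P W : Type} (S : GStruct A P W) : MTrm A P → W → W → Prop
    | .tv a, x, y => S.rel a x y
    | .comp e f, x, z => ∃ y, msemT S e x y ∧ msemT S f y z
    | .union e f, x, y => msemT S e x y ∨ msemT S f x y
    | .plus e, x, y => Relation.TransGen (fun u v => msemT S e u v) x y
    | .testL ψ e, x, y => msemF S ψ x ∧ msemT S e x y
    | .testR e ψ, x, y => msemT S e x y ∧ msemF S ψ y
end
/-- Propositional formulas over variables `V`. -/
inductive PropF (V : Type) : Type where
  | pv : V → PropF V
  | imp : PropF V → PropF V → PropF V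
  | fls : PropF V

/-- Evaluation of a propositional formula under a valuation. -/
def PropF.eval {V : Type} (v : V → Prop) : PropF V → Prop
  | .pv p => v p
  | .imp a b => PropF.eval v a → PropF.eval v b
  | .fls => False

/-- Substitution instance of a propositional formula, substituting PDL⁻ formulas
for the propositional variables. -/
def PropF.inst {V A P : Type} (σ : V → MFml A P) : PropF V → MFml A P
  | .pv p => σ p
  | .imp a b => .imp (PropF.inst σ a) (PropF.inst σ b)
  | .fls => .fls

/-- The Hilbert system `H⁻` for PDL⁻ on finite strict linear orders. -/
inductive MProof {A P : Type} : MFml A P → Prop where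
  /-- modus ponens -/
  | mp {φ ψ : MFml A P} : MProof φ → MProof (.imp φ ψ) → MProof ψ
  /-- necessitation -/
  | nec {φ : MFml A P} (e : MTrm A P) : MProof φ → MProof (.box e φ)
  /-- (Prop): all substitution-instances of valid propositional formulas -/
  | prop {V : Type} (χ : PropF V) (hval : ∀ v, PropF.eval v χ) (σ : V → MFml A P) :
      MProof (PropF.inst σ χ)
  /-- (;) -/
  | compAx (e f : MTrm A P) (φ : MFml A P) :
      MProof (MFml.iff (.box (.comp e f) φ) (.box e (.box f φ)))
  /-- (+) -/
  | unionAx (e f : MTrm A P) (φ : MFml A P) :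
      MProof (MFml.iff (.box (.union e f) φ) (MFml.and (.box e φ) (.box f φ)))
  /-- (⁺) -/
  | plusAx (e : MTrm A P) (φ : MFml A P) :
      MProof (MFml.iff (.box (.plus e) φ) (MFml.and (.box e φ) (.box e (.box (.plus e) φ))))
  /-- (⁺-Ind) -/
  | plusInd (e : MTrm A P) (φ : MFml A P) :
      MProof (.imp (MFml.and (.box e φ) (.box (.plus e) (.imp φ (.box e φ)))) (.box (.plus e) φ))
  /-- (?-L) -/
  | testLAx (ψ : MFml A P) (e : MTrm A P) (φ : MFml A P) :
      MProof (MFml.iff (.box (.testL ψ e) φ) (.imp ψ (.box e φ)))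
  /-- (?-R) -/
  | testRAx (e : MTrm A P) (ψ φ : MFml A P) :
      MProof (MFml.iff (.box (.testR e ψ) φ) (.box e (.imp ψ φ)))
  /-- (K) -/
  | kAx (e : MTrm A P) (φ ψ : MFml A P) :
      MProof (.imp (.box e (.imp φ ψ)) (.imp (.box e φ) (.box e ψ)))
  /-- (Löb-⁺) -/
  | loeb (e : MTrm A P) (φ : MFml A P) :
      MProof (.imp (.box (.plus e) (.imp (.box (.plus e) φ) φ)) (.box (.plus e) φ))
/-- A PDL⁻ formula is consistent if its negation is not derivable in `H⁻`. -/
def Consistent {A P : Type} (φ : MFml A P) : Prop := ¬ MProof (MFml.neg φ)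
/-- The Fischer–Ladner-style closure `cl(φ₀)` of a PDL⁻ formula, as the smallest
set of formulas closed under the given rules. -/
inductive Cl {A P : Type} (φ₀ : MFml A P) : MFml A P → Prop where
  | base : Cl φ₀ φ₀
  | impL {ψ χ : MFml A P} : Cl φ₀ (.imp ψ χ) → Cl φ₀ ψ
  | impR {ψ χ : MFml A P} : Cl φ₀ (.imp ψ χ) → Cl φ₀ χ
  | boxBody {e : MTrm A P} {ψ : MFml A P} : Cl φ₀ (.box e ψ) → Cl φ₀ ψ
  | unionL {e f : MTrm A P} {ψ : MFml A P} :
      Cl φ₀ (.box (.union e f) ψ) → Cl φ₀ (.box e ψ)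
  | unionR {e f : MTrm A P} {ψ : MFml A P} :
      Cl φ₀ (.box (.union e f) ψ) → Cl φ₀ (.box f ψ)
  | plus {e : MTrm A P} {ψ : MFml A P} :
      Cl φ₀ (.box (.plus e) ψ) → Cl φ₀ (.box e (.box (.plus e) ψ))
  | comp {e f : MTrm A P} {ψ : MFml A P} :
      Cl φ₀ (.box (.comp e f) ψ) → Cl φ₀ (.box e (.box f ψ))
  | testL {χ : MFml A P} {e : MTrm A P} {ψ : MFml A P} :
      Cl φ₀ (.box (.testL χ e) ψ) → Cl φ₀ (.imp χ (.box e ψ))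
  | testR {e : MTrm A P} {χ ψ : MFml A P} :
      Cl φ₀ (.box (.testR e χ) ψ) → Cl φ₀ (.box e (.imp χ ψ))

/-- Conjunction of a list of formulas. -/
def conjList {A P : Type} : List (MFml A P) → MFml A P
  | [] => MFml.tru
  | φ :: l => MFml.and φ (conjList l)

/-- Disjunction of a list of formulas (the empty disjunction is `F`). -/
def disjList {A P : Type} : List (MFml A P) → MFml A P
  | [] => MFml.fls
  | φ :: l => MFml.or φ (disjList l)

/-- `α̂`: the conjunction of the finite set of formulas `α`. -/
noncomputable def hat {A P : Type} (α : Finset (MFml A P)) : MFml A P := conjList α.toList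

/-- An atom of `φ₀`: a consistent set containing, for each `ψ ∈ cl(φ₀)`,
exactly one of `ψ` or `¬ψ`, and nothing else. -/
def IsAtomOf {A P : Type} (φ₀ : MFml A P) (α : Finset (MFml A P)) : Prop :=
  Consistent (hat α) ∧
    (∀ ψ, Cl φ₀ ψ → ((ψ ∈ α ∧ MFml.neg ψ ∉ α) ∨ (MFml.neg ψ ∈ α ∧ ψ ∉ α))) ∧
    (∀ χ ∈ α, ∃ ψ, Cl φ₀ ψ ∧ (χ = ψ ∨ χ = MFml.neg ψ))

section PDLAux
variable {A P : Type}

/-- Propositional evaluation of a PDL⁻ formula, treating non-implication,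
non-falsum formulas as atoms. -/
def peval (v : MFml A P → Prop) : MFml A P → Prop
  | .pv p => v (.pv p)
  | .imp a b => peval v a → peval v b
  | .fls => False
  | .box e φ => v (.box e φ)

/-- Propositional skeleton of a PDL⁻ formula. -/
def toPropF : MFml A P → PropF (MFml A P)
  | .pv p => .pv (.pv p)
  | .imp a b => .imp (toPropF a) (toPropF b)
  | .fls => .fls
  | .box e φ => .pv (.box e φ)

theorem inst_toPropF : ∀ φ : MFml A P, PropF.inst id (toPropF φ) = φ
  | .pv _ => rfl
  | .imp a b => by
      simp only [toPropF, PropF.inst, inst_toPropF a, inst_toPropF b]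
  | .fls => rfl
  | .box _ _ => rfl

theorem eval_toPropF (v : MFml A P → Prop) :
    ∀ φ : MFml A P, PropF.eval v (toPropF φ) ↔ peval v φ
  | .pv _ => Iff.rfl
  | .imp a b => by
      simp only [toPropF, PropF.eval, peval]
      rw [eval_toPropF v a, eval_toPropF v b]
  | .fls => Iff.rfl
  | .box _ _ => Iff.rfl

theorem prop_proof {φ : MFml A P} (h : ∀ v, peval v φ) : MProof φ := by
  have := MProof.prop (toPropF φ) (fun v => (eval_toPropF v φ).mpr (h v)) id
  rwa [inst_toPropF φ] at this

theorem peval_imp (v : MFml A P → Prop) (a b : MFml A P) :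
    peval v (.imp a b) ↔ (peval v a → peval v b) := Iff.rfl

theorem peval_fls (v : MFml A P → Prop) : peval v (MFml.fls : MFml A P) ↔ False := Iff.rfl

theorem peval_neg (v : MFml A P → Prop) (a : MFml A P) :
    peval v (MFml.neg a) ↔ ¬ peval v a := Iff.rfl

theorem peval_and (v : MFml A P → Prop) (a b : MFml A P) :
    peval v (MFml.and a b) ↔ (peval v a ∧ peval v b) := by
  simp only [MFml.and, MFml.or, MFml.neg, peval]
  tauto

theorem peval_or (v : MFml A P → Prop) (a b : MFml A P) :
    peval v (MFml.or a b) ↔ (peval v a ∨ peval v b) := by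
  simp only [MFml.or, MFml.neg, peval]
  tauto

theorem pmp1 {φ ψ : MFml A P} (h1 : MProof φ)
    (h : ∀ v, peval v φ → peval v ψ) : MProof ψ :=
  MProof.mp h1 (prop_proof (fun v => h v))

theorem pmp2 {φ ψ χ : MFml A P} (h1 : MProof φ) (h2 : MProof ψ)
    (h : ∀ v, peval v φ → peval v ψ → peval v χ) : MProof χ :=
  MProof.mp h2 (MProof.mp h1 (prop_proof (fun v => h v)))

theorem peval_conjList (v : MFml A P → Prop) :
    ∀ l : List (MFml A P), peval v (conjList l) ↔ ∀ φ ∈ l, peval v φ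
  | [] => by
      simp only [conjList, MFml.tru, MFml.neg, peval, List.not_mem_nil]
      tauto
  | φ :: l => by
      simp only [conjList, peval_and, peval_conjList v l, List.mem_cons]
      constructor
      · rintro ⟨h1, h2⟩ ψ (rfl | hψ)
        · exact h1
        · exact h2 ψ hψ
      · intro h
        exact ⟨h φ (Or.inl rfl), fun ψ hψ => h ψ (Or.inr hψ)⟩

theorem peval_disjList (v : MFml A P → Prop) :
    ∀ l : List (MFml A P), peval v (disjList l) ↔ ∃ φ ∈ l, peval v φ
  | [] => by simp [disjList, peval]
  | φ :: l => by
      simp only [disjList, peval_or, peval_disjList v l, List.mem_cons]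
      constructor
      · rintro (h | ⟨ψ, hψ, hp⟩)
        · exact ⟨φ, Or.inl rfl, h⟩
        · exact ⟨ψ, Or.inr hψ, hp⟩
      · rintro ⟨ψ, (rfl | hψ), hp⟩
        · exact Or.inl hp
        · exact Or.inr ⟨ψ, hψ, hp⟩

theorem peval_hat (v : MFml A P → Prop) (α : Finset (MFml A P)) :
    peval v (hat α) ↔ ∀ φ ∈ α, peval v φ := by
  rw [hat, peval_conjList]
  simp [Finset.mem_toList]

theorem conj_intro : ∀ l : List (MFml A P), (∀ φ ∈ l, MProof φ) → MProof (conjList l)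
  | [], _ => prop_proof (fun v => by
      simp only [conjList, MFml.tru, MFml.neg, peval]
      exact id)
  | φ :: l, h =>
      pmp2 (h φ List.mem_cons_self)
        (conj_intro l (fun ψ hψ => h ψ (List.mem_cons_of_mem _ hψ)))
        (fun v h1 h2 => by
          show peval v (MFml.and φ (conjList l))
          rw [peval_and]; exact ⟨h1, h2⟩)

theorem disj_elim (l : List (MFml A P)) (ψ : MFml A P)
    (h : ∀ φ ∈ l, MProof (.imp φ ψ)) : MProof (.imp (disjList l) ψ) := by
  have hc : MProof (conjList (l.map (fun φ => MFml.imp φ ψ))) := by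
    refine conj_intro _ ?_
    intro χ hχ
    rw [List.mem_map] at hχ
    obtain ⟨φ, hφ, rfl⟩ := hχ
    exact h φ hφ
  refine pmp1 hc (fun v hcv => ?_)
  rw [peval_conjList] at hcv
  intro hd
  rw [peval_disjList] at hd
  obtain ⟨φ, hφ, hpφ⟩ := hd
  exact (hcv _ (List.mem_map_of_mem hφ)) hpφ

theorem mfml_neg_inj {a b : MFml A P} (h : MFml.neg a = MFml.neg b) : a = b := by
  simpa [MFml.neg] using h

theorem proof_neg_hat_of_mem {γ : Finset (MFml A P)} {ψ : MFml A P}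
    (h1 : ψ ∈ γ) (h2 : MFml.neg ψ ∈ γ) : MProof (MFml.neg (hat γ)) :=
  prop_proof (fun v => by
    rw [peval_neg, peval_hat]
    intro h
    exact ((peval_neg v ψ).mp (h _ h2)) (h _ h1))

end PDLAux

open scoped Classical in
theorem add_root {A P : Type} (φ₀ : MFml A P) (e : MTrm A P)
    (AtL : Finset (Finset (MFml A P)))
    (hAtL : ∀ α, IsAtomOf φ₀ α ↔ α ∈ AtL)
    (X : Set (Finset (MFml A P)))
    (hX : ∀ α ∈ X, IsAtomOf φ₀ α) (hXne : X.Nonempty) :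
    ∃ α ∈ X, Consistent (MFml.and (hat α)
      (MFml.box (.plus e)
        (disjList (((AtL.filter (fun β => β ∉ X)).toList).map hat)))) := by
  classical
  by_contra hcon
  push_neg at hcon
  set D := disjList (((AtL.filter (fun β => β ∉ X)).toList).map hat) with hD
  obtain ⟨α₀, hα₀X⟩ := hXne
  have hα₀ := hX α₀ hα₀X
  -- Cl φ₀ is finite
  have hCl2 : ∀ ψ, Cl φ₀ ψ → ψ ∈ α₀ ∨ MFml.neg ψ ∈ α₀ := by
    intro ψ hψ
    rcases hα₀.2.1 ψ hψ with h | h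
    · exact Or.inl h.1
    · exact Or.inr h.1
  have hfin : {ψ | Cl φ₀ ψ}.Finite := by
    apply Set.Finite.subset
      (Set.Finite.union α₀.finite_toSet
        (Set.Finite.preimage
          (Set.injOn_of_injective (fun a b h => mfml_neg_inj h))
          α₀.finite_toSet))
    intro ψ hψ
    rcases hCl2 ψ hψ with h | h
    · exact Or.inl h
    · exact Or.inr h
  set ClF : Finset (MFml A P) := hfin.toFinset with hClF
  have hmemClF : ∀ ψ, ψ ∈ ClF ↔ Cl φ₀ ψ := fun ψ => hfin.mem_toFinset
  set combo : Finset (MFml A P) → Finset (MFml A P) :=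
    fun s => ClF.image (fun ψ => if ψ ∈ s then ψ else MFml.neg ψ) with hcombo
  -- the big tautological disjunction over all sign combinations
  have hbig : MProof (disjList ((ClF.powerset.toList.map combo).map hat)) := by
    apply prop_proof
    intro v
    rw [peval_disjList]
    refine ⟨hat (combo (ClF.filter (fun ψ => peval v ψ))), ?_, ?_⟩
    · rw [List.mem_map]
      refine ⟨combo (ClF.filter (fun ψ => peval v ψ)), ?_, rfl⟩
      rw [List.mem_map]
      exact ⟨ClF.filter (fun ψ => peval v ψ),
        Finset.mem_toList.mpr (Finset.mem_powerset.mpr (Finset.filter_subset _ _)), rfl⟩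
    · rw [peval_hat]
      intro φ hφ
      rw [hcombo] at hφ
      simp only [Finset.mem_image] at hφ
      obtain ⟨ψ, hψC, rfl⟩ := hφ
      by_cases hps : peval v ψ
      · rw [if_pos (Finset.mem_filter.mpr ⟨hψC, hps⟩)]
        exact hps
      · rw [if_neg (fun hmem => hps (Finset.mem_filter.mp hmem).2)]
        exact (peval_neg v ψ).mpr hps
  -- each combination is either inconsistent or an atom
  have hclass : ∀ δ ∈ (ClF.powerset.toList.map combo).map hat,
      MProof (.imp δ (disjList (AtL.toList.map hat))) := by
    intro δ hδ
    rw [List.mem_map] at hδ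
    obtain ⟨γ, hγ, rfl⟩ := hδ
    rw [List.mem_map] at hγ
    obtain ⟨s, hs, rfl⟩ := hγ
    by_cases hcons : Consistent (hat (combo s))
    · have hatom : IsAtomOf φ₀ (combo s) := by
        refine ⟨hcons, ?_, ?_⟩
        · intro ψ hψ
          have hψC : ψ ∈ ClF := (hmemClF ψ).mpr hψ
          by_cases hψs : ψ ∈ s
          · left
            have hmem : ψ ∈ combo s := by
              rw [hcombo]
              simp only [Finset.mem_image]
              exact ⟨ψ, hψC, by rw [if_pos hψs]⟩
            exact ⟨hmem, fun hneg => hcons (proof_neg_hat_of_mem hmem hneg)⟩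
          · right
            have hmem : MFml.neg ψ ∈ combo s := by
              rw [hcombo]
              simp only [Finset.mem_image]
              exact ⟨ψ, hψC, by rw [if_neg hψs]⟩
            exact ⟨hmem, fun hpos => hcons (proof_neg_hat_of_mem hpos hmem)⟩
        · intro χ hχ
          rw [hcombo] at hχ
          simp only [Finset.mem_image] at hχ
          obtain ⟨ψ, hψC, rfl⟩ := hχ
          refine ⟨ψ, (hmemClF ψ).mp hψC, ?_⟩
          by_cases hψs : ψ ∈ s
          · left; rw [if_pos hψs]
          · right; rw [if_neg hψs]
      have hmemAtL : combo s ∈ AtL := (hAtL _).mp hatom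
      apply prop_proof
      intro v hγv
      rw [peval_disjList]
      refine ⟨hat (combo s), ?_, hγv⟩
      rw [List.mem_map]
      exact ⟨combo s, Finset.mem_toList.mpr hmemAtL, rfl⟩
    · have hneg : MProof (MFml.neg (hat (combo s))) := not_not.mp hcons
      exact pmp1 hneg (fun v hn hγ => absurd hγ ((peval_neg v _).mp hn))
  have hDAll : MProof (disjList (AtL.toList.map hat)) :=
    MProof.mp hbig (disj_elim _ _ hclass)
  -- each atom implies [e⁺]D → D
  have hstep : ∀ δ ∈ AtL.toList.map hat,
      MProof (.imp δ (.imp (.box (.plus e) D) D)) := by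
    intro δ hδ
    rw [List.mem_map] at hδ
    obtain ⟨γ, hγAtL, rfl⟩ := hδ
    rw [Finset.mem_toList] at hγAtL
    by_cases hγX : γ ∈ X
    · have h := not_not.mp (hcon γ hγX)
      refine pmp1 h (fun v hn hγv hb => ?_)
      exact absurd ((peval_and v _ _).mpr ⟨hγv, hb⟩) ((peval_neg v _).mp hn)
    · apply prop_proof
      intro v hγv _
      rw [hD, peval_disjList]
      refine ⟨hat γ, ?_, hγv⟩
      rw [List.mem_map]
      exact ⟨γ, Finset.mem_toList.mpr (Finset.mem_filter.mpr ⟨hγAtL, hγX⟩), rfl⟩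
  have h2 : MProof (.imp (.box (.plus e) D) D) :=
    MProof.mp hDAll (disj_elim _ _ hstep)
  have h3 : MProof (.box (.plus e) (.imp (.box (.plus e) D) D)) :=
    MProof.nec _ h2
  have h4 : MProof (.box (.plus e) D) := MProof.mp h3 (MProof.loeb e D)
  have h5 := not_not.mp (hcon α₀ hα₀X)
  have h6 : MProof (MFml.neg (hat α₀)) :=
    pmp2 h5 h4 (fun v hn hb => (peval_neg v _).mpr (fun hα =>
      ((peval_neg v _).mp hn) ((peval_and v _ _).mpr ⟨hα, hb⟩)))
  exact hα₀.1 h6
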